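/- The pair of functions f(x,y) = x·√(1 + 1/(x²+y²)) and g(x,y) = y·√(1 + 1/(x²+y²)) solves the minimal surface system G f_xx - 2F f_xy + E f_yy = 0 and G g_xx - 2F g_xy + E g_yy = 0 on ℝ² \ {(0,0)}, where E = 1+f_x²+g_x², F = f_x f_y + g_x g_y, G = 1+f_y²+g_y². Moreover neither f nor g extends continuously to the origin (the limit of f along the positive x-axis is 1 while along the negative x-axis it is -1). -/

import Mathlib

noncomputable def pdx {E : Type*} [NormedAddCommGroup E] [NormedSpace ℝ E]
    (f : ℝ × ℝ → E) : ℝ × ℝ → E := fun p => fderiv ℝ f p (1, 0)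

noncomputable def pdy {E : Type*} [NormedAddCommGroup E] [NormedSpace ℝ E]
    (f : ℝ × ℝ → E) : ℝ × ℝ → E := fun p => fderiv ℝ f p (0, 1)
noncomputable def Ec (f g : ℝ × ℝ → ℝ) : ℝ × ℝ → ℝ :=
  fun p => 1 + (pdx f p) ^ 2 + (pdx g p) ^ 2

noncomputable def Fc (f g : ℝ × ℝ → ℝ) : ℝ × ℝ → ℝ :=
  fun p => pdx f p * pdy f p + pdx g p * pdy g p

noncomputable def Gc (f g : ℝ × ℝ → ℝ) : ℝ × ℝ → ℝ :=
  fun p => 1 + (pdy f p) ^ 2 + (pdy g p) ^ 2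

noncomputable def om (f g : ℝ × ℝ → ℝ) : ℝ × ℝ → ℝ :=
  fun p => Real.sqrt (Ec f g p * Gc f g p - (Fc f g p) ^ 2)

noncomputable def Wg (p : ℝ × ℝ → ℝ) : ℝ × ℝ → ℝ :=
  fun v => Real.sqrt (1 + (pdx p v) ^ 2 + (pdy p v) ^ 2)

noncomputable def Dm (a b : ℝ) : ℝ × ℝ →L[ℝ] ℝ :=
  a • ContinuousLinearMap.fst ℝ ℝ ℝ + b • ContinuousLinearMap.snd ℝ ℝ ℝ

lemma Dm_apply (a b : ℝ) (x : ℝ × ℝ) : Dm a b x = a * x.1 + b * x.2 := by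
  simp [Dm, mul_comm]

lemma clm_eq_Dm (L : ℝ × ℝ →L[ℝ] ℝ) : L = Dm (L (1,0)) (L (0,1)) := by
  apply ContinuousLinearMap.ext
  intro x
  have hx : (x : ℝ × ℝ) = x.1 • ((1:ℝ),(0:ℝ)) + x.2 • ((0:ℝ),(1:ℝ)) := by
    ext <;> simp
  conv_lhs => rw [hx]
  rw [map_add, map_smul, map_smul, Dm_apply]
  simp [smul_eq_mul]
  ring

lemma hasFDerivAt_Dm' {h : ℝ × ℝ → ℝ} {L : ℝ × ℝ →L[ℝ] ℝ} {v : ℝ × ℝ}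
    (H : HasFDerivAt h L v) : HasFDerivAt h (Dm (L (1,0)) (L (0,1))) v :=
  (clm_eq_Dm L) ▸ H

lemma pdx_eq {h : ℝ × ℝ → ℝ} {a b : ℝ} {v : ℝ × ℝ} (H : HasFDerivAt h (Dm a b) v) :
    pdx h v = a := by simp [pdx, H.fderiv, Dm_apply]

lemma pdy_eq {h : ℝ × ℝ → ℝ} {a b : ℝ} {v : ℝ × ℝ} (H : HasFDerivAt h (Dm a b) v) :
    pdy h v = b := by simp [pdy, H.fderiv, Dm_apply]
noncomputable def cF : ℝ × ℝ → ℝ := fun v => Real.sqrt (1 + 1 / (v.1 ^ 2 + v.2 ^ 2))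

lemma cF_sq {v : ℝ × ℝ} (hv : 0 < v.1 ^ 2 + v.2 ^ 2) :
    cF v ^ 2 = 1 + 1 / (v.1 ^ 2 + v.2 ^ 2) := by
  have : (0:ℝ) ≤ 1 + 1 / (v.1 ^ 2 + v.2 ^ 2) := by positivity
  simpa [cF] using Real.sq_sqrt this

lemma cF_pos {v : ℝ × ℝ} (hv : 0 < v.1 ^ 2 + v.2 ^ 2) : 0 < cF v := by
  have : (0:ℝ) < 1 + 1 / (v.1 ^ 2 + v.2 ^ 2) := by positivity
  exact Real.sqrt_pos.mpr this

lemma cF_squ {v : ℝ × ℝ} (hv : 0 < v.1 ^ 2 + v.2 ^ 2) :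
    cF v ^ 2 * (v.1 ^ 2 + v.2 ^ 2) = v.1 ^ 2 + v.2 ^ 2 + 1 := by
  rw [cF_sq hv]; field_simp

lemma u_has (v : ℝ × ℝ) :
    HasFDerivAt (fun p : ℝ × ℝ => p.1 ^ 2 + p.2 ^ 2)
      ((2*v.1) • ContinuousLinearMap.fst ℝ ℝ ℝ + (2*v.2) • ContinuousLinearMap.snd ℝ ℝ ℝ) v := by
  simp only [pow_two]
  have h1 := (hasFDerivAt_fst (𝕜 := ℝ) (p := v) (F := ℝ)).mul
    (hasFDerivAt_fst (𝕜 := ℝ) (p := v) (F := ℝ))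
  have h2 := (hasFDerivAt_snd (𝕜 := ℝ) (p := v) (F := ℝ)).mul
    (hasFDerivAt_snd (𝕜 := ℝ) (p := v) (F := ℝ))
  have := h1.add h2
  exact this.congr_fderiv (ContinuousLinearMap.ext fun x => by simp; ring)

lemma c_has (v : ℝ × ℝ) (hv : 0 < v.1 ^ 2 + v.2 ^ 2) :
    HasFDerivAt cF
      (Dm (-(v.1 * cF v / ((v.1^2+v.2^2) * ((v.1^2+v.2^2) + 1))))
          (-(v.2 * cF v / ((v.1^2+v.2^2) * ((v.1^2+v.2^2) + 1))))) v := by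
  have hu : (v.1^2+v.2^2) ≠ 0 := hv.ne'
  have hw : (0:ℝ) < 1 + (v.1^2+v.2^2)⁻¹ := by positivity
  have H := hasFDerivAt_Dm' ((Real.hasDerivAt_sqrt hw.ne').comp_hasFDerivAt v
    (((hasFDerivAt_inv hu).comp v (u_has v)).const_add 1))
  have hfun : cF = (Real.sqrt ∘ fun p : ℝ × ℝ =>
      1 + (Inv.inv ∘ fun p : ℝ × ℝ => p.1 ^ 2 + p.2 ^ 2) p) := by
    funext p; simp [cF, one_div, Function.comp]
  rw [hfun]
  have hcu := cF_squ hv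
  have hc0 := (cF_pos hv).ne'
  have hsq : Real.sqrt (1 + ((v.1:ℝ)^2+v.2^2)⁻¹) = cF v := by simp [cF, one_div]
  convert H using 2
  · simp only [Dm_apply, ContinuousLinearMap.coe_comp', Function.comp_apply,
      ContinuousLinearMap.smul_apply, ContinuousLinearMap.add_apply, ContinuousLinearMap.neg_apply,
      ContinuousLinearMap.mulLeftRight_apply, ContinuousLinearMap.coe_fst',
      ContinuousLinearMap.coe_snd', smul_eq_mul, hsq, ContinuousLinearMap.toSpanSingleton_apply]
    field_simp
    linear_combination (-(v.1)) * hcu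
  · simp only [Dm_apply, ContinuousLinearMap.coe_comp', Function.comp_apply,
      ContinuousLinearMap.smul_apply, ContinuousLinearMap.add_apply, ContinuousLinearMap.neg_apply,
      ContinuousLinearMap.mulLeftRight_apply, ContinuousLinearMap.coe_fst',
      ContinuousLinearMap.coe_snd', smul_eq_mul, hsq, ContinuousLinearMap.toSpanSingleton_apply]
    field_simp
    linear_combination (-(v.2)) * hcu
lemma f_has (v : ℝ × ℝ) (hv : 0 < v.1 ^ 2 + v.2 ^ 2) :
    HasFDerivAt (fun p : ℝ × ℝ => p.1 * cF p)
      (Dm (cF v * (1 - v.1^2 / ((v.1^2+v.2^2) * ((v.1^2+v.2^2) + 1))))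
          (-(v.1 * v.2 * cF v / ((v.1^2+v.2^2) * ((v.1^2+v.2^2) + 1))))) v := by
  have hu : (v.1^2+v.2^2) ≠ 0 := hv.ne'
  have hq : (v.1^2+v.2^2) * ((v.1^2+v.2^2)+1) ≠ 0 := by positivity
  have H := hasFDerivAt_Dm' ((hasFDerivAt_fst (𝕜 := ℝ) (p := v) (F := ℝ)).mul (c_has v hv))
  refine H.congr_fderiv (Eq.symm ?_); congr 1 <;>
  · simp only [Dm_apply, ContinuousLinearMap.smul_apply, ContinuousLinearMap.add_apply,
      ContinuousLinearMap.coe_fst', ContinuousLinearMap.coe_snd', smul_eq_mul]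
    field_simp
    ring

lemma g_has (v : ℝ × ℝ) (hv : 0 < v.1 ^ 2 + v.2 ^ 2) :
    HasFDerivAt (fun p : ℝ × ℝ => p.2 * cF p)
      (Dm (-(v.1 * v.2 * cF v / ((v.1^2+v.2^2) * ((v.1^2+v.2^2) + 1))))
          (cF v * (1 - v.2^2 / ((v.1^2+v.2^2) * ((v.1^2+v.2^2) + 1))))) v := by
  have hu : (v.1^2+v.2^2) ≠ 0 := hv.ne'
  have hq : (v.1^2+v.2^2) * ((v.1^2+v.2^2)+1) ≠ 0 := by positivity
  have H := hasFDerivAt_Dm' ((hasFDerivAt_snd (𝕜 := ℝ) (p := v) (F := ℝ)).mul (c_has v hv))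
  refine H.congr_fderiv (Eq.symm ?_); congr 1 <;>
  · simp only [Dm_apply, ContinuousLinearMap.smul_apply, ContinuousLinearMap.add_apply,
      ContinuousLinearMap.coe_fst', ContinuousLinearMap.coe_snd', smul_eq_mul]
    field_simp
    ring
noncomputable def Qi : ℝ × ℝ → ℝ := fun p => ((p.1^2+p.2^2) * ((p.1^2+p.2^2)+1))⁻¹

noncomputable def FXf : ℝ × ℝ → ℝ := fun p => cF p * (1 - p.1^2 * Qi p)
noncomputable def Mf : ℝ × ℝ → ℝ := fun p => -(p.1 * p.2 * cF p) * Qi p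
noncomputable def GYf : ℝ × ℝ → ℝ := fun p => cF p * (1 - p.2^2 * Qi p)

lemma q_has (v : ℝ × ℝ) :
    HasFDerivAt (fun p : ℝ × ℝ => (p.1^2+p.2^2) * ((p.1^2+p.2^2)+1))
      (((v.1^2+v.2^2) • (((2*v.1) • ContinuousLinearMap.fst ℝ ℝ ℝ + (2*v.2) • ContinuousLinearMap.snd ℝ ℝ ℝ)) +
        ((v.1^2+v.2^2)+1) • (((2*v.1) • ContinuousLinearMap.fst ℝ ℝ ℝ + (2*v.2) • ContinuousLinearMap.snd ℝ ℝ ℝ)))) v :=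
  (u_has v).mul ((u_has v).add_const 1)

lemma Qi_has (v : ℝ × ℝ) (hv : 0 < v.1 ^ 2 + v.2 ^ 2) :
    HasFDerivAt Qi ((ContinuousLinearMap.smulRight (1 : ℝ →L[ℝ] ℝ)
        (-(((v.1^2+v.2^2) * ((v.1^2+v.2^2)+1)) ^ 2)⁻¹)).comp
      (((v.1^2+v.2^2) • (((2*v.1) • ContinuousLinearMap.fst ℝ ℝ ℝ + (2*v.2) • ContinuousLinearMap.snd ℝ ℝ ℝ)) +
        ((v.1^2+v.2^2)+1) • (((2*v.1) • ContinuousLinearMap.fst ℝ ℝ ℝ + (2*v.2) • ContinuousLinearMap.snd ℝ ℝ ℝ))))) v := by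
  have hq : (v.1^2+v.2^2) * ((v.1^2+v.2^2)+1) ≠ 0 := by positivity
  have := (hasFDerivAt_inv hq).comp v (q_has v)
  exact this

lemma FXf_has (v : ℝ × ℝ) (hv : 0 < v.1 ^ 2 + v.2 ^ 2) :
    HasFDerivAt FXf
      (Dm (v.1 * cF v * (v.1^2*(4*(v.1^2+v.2^2)+3) - 3*((v.1^2+v.2^2) * ((v.1^2+v.2^2)+1))) /
            ((v.1^2+v.2^2) * ((v.1^2+v.2^2)+1))^2)
          (v.2 * cF v * (v.1^2*(4*(v.1^2+v.2^2)+3) - ((v.1^2+v.2^2) * ((v.1^2+v.2^2)+1))) /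
            ((v.1^2+v.2^2) * ((v.1^2+v.2^2)+1))^2)) v := by
  have hu : (v.1^2+v.2^2) ≠ 0 := hv.ne'
  have hq : (v.1^2+v.2^2) * ((v.1^2+v.2^2)+1) ≠ 0 := by positivity
  have H := hasFDerivAt_Dm' ((c_has v hv).mul
    ((((hasFDerivAt_fst (𝕜 := ℝ) (p := v) (F := ℝ)).mul
        (hasFDerivAt_fst (𝕜 := ℝ) (p := v) (F := ℝ))).mul (Qi_has v hv)).const_sub 1))
  have hfun : FXf = fun p : ℝ × ℝ => cF p * (1 - p.1 * p.1 * Qi p) := by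
    funext p
    show cF p * (1 - p.1^2 * Qi p) = cF p * (1 - p.1 * p.1 * Qi p)
    ring
  rw [hfun]
  refine H.congr_fderiv (Eq.symm ?_); congr 1 <;>
  · simp only [Dm_apply, ContinuousLinearMap.smul_apply, ContinuousLinearMap.add_apply, ContinuousLinearMap.neg_apply,
      ContinuousLinearMap.coe_comp', Function.comp_apply, ContinuousLinearMap.smulRight_apply,
      ContinuousLinearMap.one_apply, ContinuousLinearMap.coe_fst',
      ContinuousLinearMap.coe_snd', smul_eq_mul, Qi, Pi.mul_apply, Pi.neg_apply]
    field_simp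
    ring

lemma Mf_has (v : ℝ × ℝ) (hv : 0 < v.1 ^ 2 + v.2 ^ 2) :
    HasFDerivAt Mf
      (Dm (v.2 * cF v * (v.1^2*(4*(v.1^2+v.2^2)+3) - ((v.1^2+v.2^2) * ((v.1^2+v.2^2)+1))) /
            ((v.1^2+v.2^2) * ((v.1^2+v.2^2)+1))^2)
          (v.1 * cF v * (v.2^2*(4*(v.1^2+v.2^2)+3) - ((v.1^2+v.2^2) * ((v.1^2+v.2^2)+1))) /
            ((v.1^2+v.2^2) * ((v.1^2+v.2^2)+1))^2)) v := by
  have hu : (v.1^2+v.2^2) ≠ 0 := hv.ne'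
  have hq : (v.1^2+v.2^2) * ((v.1^2+v.2^2)+1) ≠ 0 := by positivity
  have H := hasFDerivAt_Dm' (((((hasFDerivAt_fst (𝕜 := ℝ) (p := v) (F := ℝ)).mul
      (hasFDerivAt_snd (𝕜 := ℝ) (p := v) (F := ℝ))).mul (c_has v hv)).neg.mul (Qi_has v hv)))
  have hfun : Mf = fun p : ℝ × ℝ => -(p.1 * p.2 * cF p) * Qi p := rfl
  rw [hfun]
  refine H.congr_fderiv (Eq.symm ?_); congr 1 <;>
  · simp only [Dm_apply, ContinuousLinearMap.smul_apply, ContinuousLinearMap.add_apply,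
      ContinuousLinearMap.neg_apply,
      ContinuousLinearMap.coe_comp', Function.comp_apply, ContinuousLinearMap.smulRight_apply,
      ContinuousLinearMap.one_apply, ContinuousLinearMap.coe_fst',
      ContinuousLinearMap.coe_snd', smul_eq_mul, Qi, Pi.mul_apply, Pi.neg_apply]
    field_simp
    ring

lemma GYf_has (v : ℝ × ℝ) (hv : 0 < v.1 ^ 2 + v.2 ^ 2) :
    HasFDerivAt GYf
      (Dm (v.1 * cF v * (v.2^2*(4*(v.1^2+v.2^2)+3) - ((v.1^2+v.2^2) * ((v.1^2+v.2^2)+1))) /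
            ((v.1^2+v.2^2) * ((v.1^2+v.2^2)+1))^2)
          (v.2 * cF v * (v.2^2*(4*(v.1^2+v.2^2)+3) - 3*((v.1^2+v.2^2) * ((v.1^2+v.2^2)+1))) /
            ((v.1^2+v.2^2) * ((v.1^2+v.2^2)+1))^2)) v := by
  have hu : (v.1^2+v.2^2) ≠ 0 := hv.ne'
  have hq : (v.1^2+v.2^2) * ((v.1^2+v.2^2)+1) ≠ 0 := by positivity
  have H := hasFDerivAt_Dm' ((c_has v hv).mul
    ((((hasFDerivAt_snd (𝕜 := ℝ) (p := v) (F := ℝ)).mul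
        (hasFDerivAt_snd (𝕜 := ℝ) (p := v) (F := ℝ))).mul (Qi_has v hv)).const_sub 1))
  have hfun : GYf = fun p : ℝ × ℝ => cF p * (1 - p.2 * p.2 * Qi p) := by
    funext p
    show cF p * (1 - p.2^2 * Qi p) = cF p * (1 - p.2 * p.2 * Qi p)
    ring
  rw [hfun]
  refine H.congr_fderiv (Eq.symm ?_); congr 1 <;>
  · simp only [Dm_apply, ContinuousLinearMap.smul_apply, ContinuousLinearMap.add_apply, ContinuousLinearMap.neg_apply,
      ContinuousLinearMap.coe_comp', Function.comp_apply, ContinuousLinearMap.smulRight_apply,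
      ContinuousLinearMap.one_apply, ContinuousLinearMap.coe_fst',
      ContinuousLinearMap.coe_snd', smul_eq_mul, Qi, Pi.mul_apply, Pi.neg_apply]
    field_simp
    ring
lemma pdxf_eq (v : ℝ × ℝ) (hv : 0 < v.1 ^ 2 + v.2 ^ 2) :
    pdx (fun p : ℝ × ℝ => p.1 * cF p) v = FXf v := by
  rw [pdx_eq (f_has v hv)]
  simp only [FXf, Qi, div_eq_mul_inv]

lemma pdyf_eq (v : ℝ × ℝ) (hv : 0 < v.1 ^ 2 + v.2 ^ 2) :
    pdy (fun p : ℝ × ℝ => p.1 * cF p) v = Mf v := by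
  rw [pdy_eq (f_has v hv)]
  simp only [Mf, Qi, div_eq_mul_inv, neg_mul]

lemma pdxg_eq (v : ℝ × ℝ) (hv : 0 < v.1 ^ 2 + v.2 ^ 2) :
    pdx (fun p : ℝ × ℝ => p.2 * cF p) v = Mf v := by
  rw [pdx_eq (g_has v hv)]
  simp only [Mf, Qi, div_eq_mul_inv, neg_mul]

lemma pdyg_eq (v : ℝ × ℝ) (hv : 0 < v.1 ^ 2 + v.2 ^ 2) :
    pdy (fun p : ℝ × ℝ => p.2 * cF p) v = GYf v := by
  rw [pdy_eq (g_has v hv)]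
  simp only [GYf, Qi, div_eq_mul_inv]

lemma mem_nhds_pos (v : ℝ × ℝ) (hv : 0 < v.1 ^ 2 + v.2 ^ 2) :
    {w : ℝ × ℝ | 0 < w.1 ^ 2 + w.2 ^ 2} ∈ nhds v := by
  have hc : Continuous fun w : ℝ × ℝ => w.1 ^ 2 + w.2 ^ 2 := by continuity
  exact (isOpen_lt continuous_const hc).mem_nhds hv

set_option maxHeartbeats 2000000 in
lemma pde_main (v : ℝ × ℝ) (hv : 0 < v.1 ^ 2 + v.2 ^ 2) :
    (Gc (fun p : ℝ × ℝ => p.1 * cF p) (fun p : ℝ × ℝ => p.2 * cF p) v *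
        pdx (pdx (fun p : ℝ × ℝ => p.1 * cF p)) v -
      2 * Fc (fun p : ℝ × ℝ => p.1 * cF p) (fun p : ℝ × ℝ => p.2 * cF p) v *
        pdy (pdx (fun p : ℝ × ℝ => p.1 * cF p)) v +
      Ec (fun p : ℝ × ℝ => p.1 * cF p) (fun p : ℝ × ℝ => p.2 * cF p) v *
        pdy (pdy (fun p : ℝ × ℝ => p.1 * cF p)) v = 0) ∧
    (Gc (fun p : ℝ × ℝ => p.1 * cF p) (fun p : ℝ × ℝ => p.2 * cF p) v *
        pdx (pdx (fun p : ℝ × ℝ => p.2 * cF p)) v -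
      2 * Fc (fun p : ℝ × ℝ => p.1 * cF p) (fun p : ℝ × ℝ => p.2 * cF p) v *
        pdy (pdx (fun p : ℝ × ℝ => p.2 * cF p)) v +
      Ec (fun p : ℝ × ℝ => p.1 * cF p) (fun p : ℝ × ℝ => p.2 * cF p) v *
        pdy (pdy (fun p : ℝ × ℝ => p.2 * cF p)) v = 0) := by
  have hu : (v.1 ^ 2 + v.2 ^ 2) ≠ 0 := hv.ne'
  have hu1 : (v.1 ^ 2 + v.2 ^ 2) + 1 ≠ 0 := by positivity
  have hq : (v.1 ^ 2 + v.2 ^ 2) * ((v.1 ^ 2 + v.2 ^ 2) + 1) ≠ 0 := by positivity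
  have hc0 : cF v ≠ 0 := (cF_pos hv).ne'
  -- eventual equalities
  have e1 : pdx (fun p : ℝ × ℝ => p.1 * cF p) =ᶠ[nhds v] FXf := by
    filter_upwards [mem_nhds_pos v hv] with w hw; exact pdxf_eq w hw
  have e2 : pdy (fun p : ℝ × ℝ => p.1 * cF p) =ᶠ[nhds v] Mf := by
    filter_upwards [mem_nhds_pos v hv] with w hw; exact pdyf_eq w hw
  have e3 : pdx (fun p : ℝ × ℝ => p.2 * cF p) =ᶠ[nhds v] Mf := by
    filter_upwards [mem_nhds_pos v hv] with w hw; exact pdxg_eq w hw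
  have e4 : pdy (fun p : ℝ × ℝ => p.2 * cF p) =ᶠ[nhds v] GYf := by
    filter_upwards [mem_nhds_pos v hv] with w hw; exact pdyg_eq w hw
  -- second partials
  have hxx : pdx (pdx (fun p : ℝ × ℝ => p.1 * cF p)) v =
      v.1 * cF v * (v.1^2*(4*(v.1^2+v.2^2)+3) - 3*((v.1^2+v.2^2) * ((v.1^2+v.2^2)+1))) /
        ((v.1^2+v.2^2) * ((v.1^2+v.2^2)+1))^2 := by
    show fderiv ℝ (pdx (fun p : ℝ × ℝ => p.1 * cF p)) v (1,0) = _
    rw [e1.fderiv_eq, (FXf_has v hv).fderiv, Dm_apply]; simp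
  have hxy : pdy (pdx (fun p : ℝ × ℝ => p.1 * cF p)) v =
      v.2 * cF v * (v.1^2*(4*(v.1^2+v.2^2)+3) - ((v.1^2+v.2^2) * ((v.1^2+v.2^2)+1))) /
        ((v.1^2+v.2^2) * ((v.1^2+v.2^2)+1))^2 := by
    show fderiv ℝ (pdx (fun p : ℝ × ℝ => p.1 * cF p)) v (0,1) = _
    rw [e1.fderiv_eq, (FXf_has v hv).fderiv, Dm_apply]; simp
  have hyy : pdy (pdy (fun p : ℝ × ℝ => p.1 * cF p)) v =
      v.1 * cF v * (v.2^2*(4*(v.1^2+v.2^2)+3) - ((v.1^2+v.2^2) * ((v.1^2+v.2^2)+1))) /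
        ((v.1^2+v.2^2) * ((v.1^2+v.2^2)+1))^2 := by
    show fderiv ℝ (pdy (fun p : ℝ × ℝ => p.1 * cF p)) v (0,1) = _
    rw [e2.fderiv_eq, (Mf_has v hv).fderiv, Dm_apply]; simp
  have gxx : pdx (pdx (fun p : ℝ × ℝ => p.2 * cF p)) v =
      v.2 * cF v * (v.1^2*(4*(v.1^2+v.2^2)+3) - ((v.1^2+v.2^2) * ((v.1^2+v.2^2)+1))) /
        ((v.1^2+v.2^2) * ((v.1^2+v.2^2)+1))^2 := by
    show fderiv ℝ (pdx (fun p : ℝ × ℝ => p.2 * cF p)) v (1,0) = _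
    rw [e3.fderiv_eq, (Mf_has v hv).fderiv, Dm_apply]; simp
  have gxy : pdy (pdx (fun p : ℝ × ℝ => p.2 * cF p)) v =
      v.1 * cF v * (v.2^2*(4*(v.1^2+v.2^2)+3) - ((v.1^2+v.2^2) * ((v.1^2+v.2^2)+1))) /
        ((v.1^2+v.2^2) * ((v.1^2+v.2^2)+1))^2 := by
    show fderiv ℝ (pdx (fun p : ℝ × ℝ => p.2 * cF p)) v (0,1) = _
    rw [e3.fderiv_eq, (Mf_has v hv).fderiv, Dm_apply]; simp
  have gyy : pdy (pdy (fun p : ℝ × ℝ => p.2 * cF p)) v =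
      v.2 * cF v * (v.2^2*(4*(v.1^2+v.2^2)+3) - 3*((v.1^2+v.2^2) * ((v.1^2+v.2^2)+1))) /
        ((v.1^2+v.2^2) * ((v.1^2+v.2^2)+1))^2 := by
    show fderiv ℝ (pdy (fun p : ℝ × ℝ => p.2 * cF p)) v (0,1) = _
    rw [e4.fderiv_eq, (GYf_has v hv).fderiv, Dm_apply]; simp
  -- E, F, G closed forms
  have hE : Ec (fun p : ℝ × ℝ => p.1 * cF p) (fun p : ℝ × ℝ => p.2 * cF p) v =
      1 + ((v.1^2+v.2^2)+1)/(v.1^2+v.2^2) -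
        v.1^2*(2*(v.1^2+v.2^2)+1)/((v.1^2+v.2^2)^2*((v.1^2+v.2^2)+1)) := by
    show 1 + (pdx (fun p : ℝ × ℝ => p.1 * cF p) v)^2 + (pdx (fun p : ℝ × ℝ => p.2 * cF p) v)^2 = _
    rw [pdx_eq (f_has v hv), pdx_eq (g_has v hv)]
    rw [show (cF v * (1 - v.1^2 / ((v.1^2+v.2^2) * ((v.1^2+v.2^2)+1))))^2 =
        cF v^2 * (1 - v.1^2 / ((v.1^2+v.2^2) * ((v.1^2+v.2^2)+1)))^2 from by ring,
      show (-(v.1*v.2*cF v / ((v.1^2+v.2^2) * ((v.1^2+v.2^2)+1))))^2 =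
        cF v^2 * (v.1*v.2 / ((v.1^2+v.2^2) * ((v.1^2+v.2^2)+1)))^2 from by ring,
      cF_sq hv]
    field_simp
    ring
  have hG : Gc (fun p : ℝ × ℝ => p.1 * cF p) (fun p : ℝ × ℝ => p.2 * cF p) v =
      1 + ((v.1^2+v.2^2)+1)/(v.1^2+v.2^2) -
        v.2^2*(2*(v.1^2+v.2^2)+1)/((v.1^2+v.2^2)^2*((v.1^2+v.2^2)+1)) := by
    show 1 + (pdy (fun p : ℝ × ℝ => p.1 * cF p) v)^2 + (pdy (fun p : ℝ × ℝ => p.2 * cF p) v)^2 = _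
    rw [pdy_eq (f_has v hv), pdy_eq (g_has v hv)]
    rw [show (cF v * (1 - v.2^2 / ((v.1^2+v.2^2) * ((v.1^2+v.2^2)+1))))^2 =
        cF v^2 * (1 - v.2^2 / ((v.1^2+v.2^2) * ((v.1^2+v.2^2)+1)))^2 from by ring,
      show (-(v.1*v.2*cF v / ((v.1^2+v.2^2) * ((v.1^2+v.2^2)+1))))^2 =
        cF v^2 * (v.1*v.2 / ((v.1^2+v.2^2) * ((v.1^2+v.2^2)+1)))^2 from by ring,
      cF_sq hv]
    field_simp
    ring
  have hF : Fc (fun p : ℝ × ℝ => p.1 * cF p) (fun p : ℝ × ℝ => p.2 * cF p) v =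
      -(v.1*v.2*(2*(v.1^2+v.2^2)+1))/((v.1^2+v.2^2)^2*((v.1^2+v.2^2)+1)) := by
    show pdx (fun p : ℝ × ℝ => p.1 * cF p) v * pdy (fun p : ℝ × ℝ => p.1 * cF p) v +
      pdx (fun p : ℝ × ℝ => p.2 * cF p) v * pdy (fun p : ℝ × ℝ => p.2 * cF p) v = _
    rw [pdx_eq (f_has v hv), pdy_eq (f_has v hv), pdx_eq (g_has v hv), pdy_eq (g_has v hv)]
    rw [show cF v * (1 - v.1^2 / ((v.1^2+v.2^2) * ((v.1^2+v.2^2)+1))) *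
        -(v.1*v.2*cF v / ((v.1^2+v.2^2) * ((v.1^2+v.2^2)+1))) +
        -(v.1*v.2*cF v / ((v.1^2+v.2^2) * ((v.1^2+v.2^2)+1))) *
        (cF v * (1 - v.2^2 / ((v.1^2+v.2^2) * ((v.1^2+v.2^2)+1)))) =
        cF v^2 * (-(v.1*v.2 / ((v.1^2+v.2^2) * ((v.1^2+v.2^2)+1))) *
          (2 - (v.1^2+v.2^2) / ((v.1^2+v.2^2) * ((v.1^2+v.2^2)+1)))) from by ring,
      cF_sq hv]
    field_simp
    ring
  constructor
  · rw [hE, hF, hG, hxx, hxy, hyy]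
    field_simp
    ring
  · rw [hE, hF, hG, gxx, gxy, gyy]
    field_simp
    ring
lemma sqrt_base : Filter.Tendsto (fun x : ℝ => Real.sqrt (x^2+1)) (nhds 0) (nhds 1) := by
  have hc : Continuous fun x : ℝ => Real.sqrt (x^2+1) := by continuity
  have := hc.tendsto 0
  simpa using this

lemma f_pos_val {x : ℝ} (hx : 0 < x) : x * cF (x, 0) = Real.sqrt (x^2+1) := by
  have hx0 : x ≠ 0 := hx.ne'
  show x * Real.sqrt (1 + 1/(x^2 + (0:ℝ)^2)) = _
  have h1 : (1:ℝ) + 1/(x^2 + (0:ℝ)^2) = (x^2+1)/x^2 := by field_simp; ring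
  rw [h1, Real.sqrt_div (by positivity), Real.sqrt_sq hx.le]
  field_simp

lemma f_neg_val {x : ℝ} (hx : x < 0) : x * cF (x, 0) = -Real.sqrt (x^2+1) := by
  have hx0 : x ≠ 0 := hx.ne
  show x * Real.sqrt (1 + 1/(x^2 + (0:ℝ)^2)) = _
  have h1 : (1:ℝ) + 1/(x^2 + (0:ℝ)^2) = (x^2+1)/x^2 := by field_simp; ring
  rw [h1, Real.sqrt_div (by positivity), Real.sqrt_sq_eq_abs, abs_of_neg hx]
  rw [show x * (Real.sqrt (x^2+1) / -x) = -(Real.sqrt (x^2+1) * (x / x)) from by ring,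
    div_self hx0, mul_one]

lemma g_pos_val {y : ℝ} (hy : 0 < y) : y * cF (0, y) = Real.sqrt (y^2+1) := by
  have hy0 : y ≠ 0 := hy.ne'
  show y * Real.sqrt (1 + 1/((0:ℝ)^2 + y^2)) = _
  have h1 : (1:ℝ) + 1/((0:ℝ)^2 + y^2) = (y^2+1)/y^2 := by field_simp; ring
  rw [h1, Real.sqrt_div (by positivity), Real.sqrt_sq hy.le]
  field_simp

lemma g_neg_val {y : ℝ} (hy : y < 0) : y * cF (0, y) = -Real.sqrt (y^2+1) := by
  have hy0 : y ≠ 0 := hy.ne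
  show y * Real.sqrt (1 + 1/((0:ℝ)^2 + y^2)) = _
  have h1 : (1:ℝ) + 1/((0:ℝ)^2 + y^2) = (y^2+1)/y^2 := by field_simp; ring
  rw [h1, Real.sqrt_div (by positivity), Real.sqrt_sq_eq_abs, abs_of_neg hy]
  rw [show y * (Real.sqrt (y^2+1) / -y) = -(Real.sqrt (y^2+1) * (y / y)) from by ring,
    div_self hy0, mul_one]

lemma f_tendsto_pos :
    Filter.Tendsto (fun x : ℝ => x * cF (x, 0)) (nhdsWithin 0 (Set.Ioi 0)) (nhds 1) := by
  refine Filter.Tendsto.congr' ?_ (sqrt_base.mono_left nhdsWithin_le_nhds)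
  filter_upwards [self_mem_nhdsWithin] with x hx
  exact (f_pos_val hx).symm

lemma f_tendsto_neg :
    Filter.Tendsto (fun x : ℝ => x * cF (x, 0)) (nhdsWithin 0 (Set.Iio 0)) (nhds (-1)) := by
  refine Filter.Tendsto.congr' ?_ ((sqrt_base.neg).mono_left nhdsWithin_le_nhds)
  filter_upwards [self_mem_nhdsWithin] with x hx
  exact (f_neg_val hx).symm

lemma g_tendsto_pos :
    Filter.Tendsto (fun y : ℝ => y * cF (0, y)) (nhdsWithin 0 (Set.Ioi 0)) (nhds 1) := by
  refine Filter.Tendsto.congr' ?_ (sqrt_base.mono_left nhdsWithin_le_nhds)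
  filter_upwards [self_mem_nhdsWithin] with y hy
  exact (g_pos_val hy).symm

lemma g_tendsto_neg :
    Filter.Tendsto (fun y : ℝ => y * cF (0, y)) (nhdsWithin 0 (Set.Iio 0)) (nhds (-1)) := by
  refine Filter.Tendsto.congr' ?_ ((sqrt_base.neg).mono_left nhdsWithin_le_nhds)
  filter_upwards [self_mem_nhdsWithin] with y hy
  exact (g_neg_val hy).symm

lemma path_fst (s : Set ℝ) (hs : ∀ x ∈ s, x ≠ 0) :
    Filter.Tendsto (fun x : ℝ => ((x, (0:ℝ)) : ℝ × ℝ)) (nhdsWithin 0 s)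
      (nhdsWithin ((0:ℝ), (0:ℝ)) {((0:ℝ), (0:ℝ))}ᶜ) := by
  rw [tendsto_nhdsWithin_iff]
  constructor
  · have hc : Continuous fun x : ℝ => ((x, (0:ℝ)) : ℝ × ℝ) := by continuity
    exact (hc.tendsto 0).mono_left nhdsWithin_le_nhds
  · filter_upwards [self_mem_nhdsWithin] with x hx
    simp only [Set.mem_compl_iff, Set.mem_singleton_iff, Prod.mk.injEq, not_and]
    intro h
    exact absurd h (hs x hx)

lemma path_snd (s : Set ℝ) (hs : ∀ y ∈ s, y ≠ 0) :
    Filter.Tendsto (fun y : ℝ => (((0:ℝ), y) : ℝ × ℝ)) (nhdsWithin 0 s)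
      (nhdsWithin ((0:ℝ), (0:ℝ)) {((0:ℝ), (0:ℝ))}ᶜ) := by
  rw [tendsto_nhdsWithin_iff]
  constructor
  · have hc : Continuous fun y : ℝ => (((0:ℝ), y) : ℝ × ℝ) := by continuity
    exact (hc.tendsto 0).mono_left nhdsWithin_le_nhds
  · filter_upwards [self_mem_nhdsWithin] with y hy
    simp only [Set.mem_compl_iff, Set.mem_singleton_iff, Prod.mk.injEq, not_and]
    intro h
    exact fun h2 => (hs y hy) h2
theorem stmt_19 (f g : ℝ × ℝ → ℝ)
    (hfdef : f = fun v => v.1 * Real.sqrt (1 + 1 / (v.1 ^ 2 + v.2 ^ 2)))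
    (hgdef : g = fun v => v.2 * Real.sqrt (1 + 1 / (v.1 ^ 2 + v.2 ^ 2))) :
    (∀ v : ℝ × ℝ, v ≠ (0, 0) →
      Gc f g v * pdx (pdx f) v - 2 * Fc f g v * pdy (pdx f) v + Ec f g v * pdy (pdy f) v = 0 ∧
      Gc f g v * pdx (pdx g) v - 2 * Fc f g v * pdy (pdx g) v + Ec f g v * pdy (pdy g) v = 0) ∧
    Filter.Tendsto (fun x : ℝ => f (x, 0)) (nhdsWithin 0 (Set.Ioi 0)) (nhds 1) ∧
    Filter.Tendsto (fun x : ℝ => f (x, 0)) (nhdsWithin 0 (Set.Iio 0)) (nhds (-1)) ∧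
    (¬ ∃ L : ℝ, Filter.Tendsto f (nhdsWithin (0, 0) {(0, 0)}ᶜ) (nhds L)) ∧
    (¬ ∃ L : ℝ, Filter.Tendsto g (nhdsWithin (0, 0) {(0, 0)}ᶜ) (nhds L)) := by
  have hfc : f = fun p : ℝ × ℝ => p.1 * cF p := hfdef
  have hgc : g = fun p : ℝ × ℝ => p.2 * cF p := hgdef
  subst hfc
  subst hgc
  refine ⟨?_, ?_, ?_, ?_, ?_⟩
  · intro v hv
    have h1 : v.1 ≠ 0 ∨ v.2 ≠ 0 := by
      by_contra h
      push_neg at h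
      exact hv (Prod.ext_iff.mpr ⟨h.1, h.2⟩)
    have hvu : 0 < v.1 ^ 2 + v.2 ^ 2 := by
      rcases h1 with h | h <;> positivity
    exact pde_main v hvu
  · exact f_tendsto_pos
  · exact f_tendsto_neg
  · rintro ⟨L, hL⟩
    have h1 : Filter.Tendsto (fun x : ℝ => x * cF (x, 0)) (nhdsWithin 0 (Set.Ioi 0)) (nhds L) :=
      hL.comp (path_fst (Set.Ioi 0) (fun x hx => ne_of_gt hx))
    have h2 : Filter.Tendsto (fun x : ℝ => x * cF (x, 0)) (nhdsWithin 0 (Set.Iio 0)) (nhds L) :=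
      hL.comp (path_fst (Set.Iio 0) (fun x hx => ne_of_lt hx))
    have e1 : L = 1 := tendsto_nhds_unique h1 f_tendsto_pos
    have e2 : L = -1 := tendsto_nhds_unique h2 f_tendsto_neg
    linarith
  · rintro ⟨L, hL⟩
    have h1 : Filter.Tendsto (fun y : ℝ => y * cF (0, y)) (nhdsWithin 0 (Set.Ioi 0)) (nhds L) :=
      hL.comp (path_snd (Set.Ioi 0) (fun y hy => ne_of_gt hy))
    have h2 : Filter.Tendsto (fun y : ℝ => y * cF (0, y)) (nhdsWithin 0 (Set.Iio 0)) (nhds L) :=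
      hL.comp (path_snd (Set.Iio 0) (fun y hy => ne_of_lt hy))
    have e1 : L = 1 := tendsto_nhds_unique h1 g_tendsto_pos
    have e2 : L = -1 := tendsto_nhds_unique h2 g_tendsto_neg
    linarith
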